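/- Suppose for each n < ω the group S = Sym(ω) is the union of an increasing chain ⟨G^n_i : i < λ_n⟩ of subgroups, and suppose that for every n, every i < λ_n, and every infinite X ⊆ ω, the setwise stabilizer of X in G^n_i does not induce Sym(X) on X. Fix f ∈ ∏_n λ_n and a partition ω = ⋃_n X_n into disjoint infinite sets. Then there exists π ∈ Sym(ω) with π[X_n] = X_n for all n such that for every n and every g ∈ G^n_{f(n)}, g↾X_n ≠ π↾X_n. In particular S ≠ ⋃_n G^n_{f(n)}. -/

import Mathlib

/-- The diagonal argument of Theorem 2.1: if for each `n` the group `Sym(ω)` is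
covered by an increasing chain `⟨G^n_i : i < λ_n⟩` none of whose members
induces the full symmetric group on any infinite set, then for every
`f ∈ ∏ λ_n` and partition `ω = ⋃ X_n` into infinite sets there is a
permutation `π` preserving each `X_n` whose restriction to `X_n` differs from
that of every `g ∈ G^n_{f(n)}`; in particular `Sym(ω) ≠ ⋃_n G^n_{f(n)}`. -/
theorem stmt_15 (lam : ℕ → Cardinal)
    (G : ℕ → Ordinal → Subgroup (Equiv.Perm ℕ))
    (hchain : ∀ n, ∀ a b : Ordinal, a ≤ b → G n a ≤ G n b)
    (hcover : ∀ n, ∀ g : Equiv.Perm ℕ, ∃ a < (lam n).ord, g ∈ G n a)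
    (hstab : ∀ n, ∀ a < (lam n).ord, ∀ X : Set ℕ, X.Infinite →
      ¬ (∀ σ : Equiv.Perm ↥X, ∃ g ∈ G n a, ⇑g '' X = X ∧ ∀ x : ↥X, g ↑x = ↑(σ x)))
    (f : ℕ → Ordinal) (hf : ∀ n, f n < (lam n).ord)
    (X : ℕ → Set ℕ) (hinf : ∀ n, (X n).Infinite)
    (hdisj : ∀ m n, m ≠ n → Disjoint (X m) (X n))
    (hcov : (⋃ n, X n) = Set.univ) :
    ∃ π : Equiv.Perm ℕ, (∀ n, ⇑π '' X n = X n) ∧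
      (∀ n, ∀ g ∈ G n (f n), ∃ x ∈ X n, g x ≠ π x) ∧
      (Set.univ : Set (Equiv.Perm ℕ)) ≠ ⋃ n, ↑(G n (f n)) := by
  classical
  have hmem : ∀ x : ℕ, ∃ n, x ∈ X n := by
    intro x
    have h := Set.mem_univ x
    rw [← hcov] at h
    exact Set.mem_iUnion.mp h
  set ind : ℕ → ℕ := fun x => (hmem x).choose with hind
  have hindmem : ∀ x, x ∈ X (ind x) := fun x => (hmem x).choose_spec
  have hind_eq : ∀ x n, x ∈ X n → ind x = n := by
    intro x n hx
    by_contra h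
    exact (hdisj _ _ h).ne_of_mem (hindmem x) hx rfl
  -- choose diagonal permutations
  have key : ∀ n, ∃ σ : Equiv.Perm ↥(X n), ∀ g ∈ G n (f n),
      ¬ (⇑g '' X n = X n ∧ ∀ x : ↥(X n), g ↑x = ↑(σ x)) := by
    intro n
    have h := hstab n (f n) (hf n) (X n) (hinf n)
    by_contra hc
    push_neg at hc
    exact h fun σ => by
      obtain ⟨g, hg, h1⟩ := hc σ
      exact ⟨g, hg, h1.1, h1.2⟩
  choose σ hσ using key
  -- fiber equivalences
  have hiff : ∀ n (x : ℕ), ind x = n ↔ x ∈ X n := fun n x =>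
    ⟨fun h => h ▸ hindmem x, fun h => hind_eq x n h⟩
  let e : ∀ n, {x // ind x = n} ≃ ↥(X n) := fun n => Equiv.subtypeEquivRight (hiff n)
  let σ' : ∀ n, Equiv.Perm {x // ind x = n} := fun n =>
    ((e n).permCongr).symm (σ n)
  let π : Equiv.Perm ℕ :=
    (Equiv.sigmaFiberEquiv ind).symm.trans
      ((Equiv.sigmaCongrRight σ').trans (Equiv.sigmaFiberEquiv ind))
  have hπ : ∀ n (x : ℕ) (hx : x ∈ X n), π x = ↑(σ n ⟨x, hx⟩) := by
    intro n x hx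
    have h := hind_eq x n hx
    subst h
    simp [π, σ', e, Equiv.sigmaFiberEquiv, Equiv.sigmaCongrRight,
      Equiv.permCongr, Equiv.equivCongr, Equiv.subtypeEquivRight]
    rfl
  have himg : ∀ n, ⇑π '' X n = X n := by
    intro n
    apply Set.Subset.antisymm
    · rintro y ⟨x, hx, rfl⟩
      rw [hπ n x hx]
      exact (σ n ⟨x, hx⟩).2
    · intro y hy
      refine ⟨↑((σ n).symm ⟨y, hy⟩), ((σ n).symm ⟨y, hy⟩).2, ?_⟩
      rw [hπ n _ ((σ n).symm ⟨y, hy⟩).2]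
      simp
  have hdiag : ∀ n, ∀ g ∈ G n (f n), ∃ x ∈ X n, g x ≠ π x := by
    intro n g hg
    by_contra hc
    push_neg at hc
    refine hσ n g hg ⟨?_, ?_⟩
    · apply Set.Subset.antisymm
      · rintro y ⟨x, hx, rfl⟩
        rw [hc x hx]
        rw [← himg n]
        exact ⟨x, hx, rfl⟩
      · intro y hy
        rw [← himg n] at hy
        obtain ⟨x, hx, rfl⟩ := hy
        exact ⟨x, hx, hc x hx⟩
    · intro x
      rw [hc x x.2, hπ n x x.2]
  refine ⟨π, himg, hdiag, ?_⟩
  intro h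
  have hπmem : π ∈ (⋃ n, ↑(G n (f n)) : Set (Equiv.Perm ℕ)) := h ▸ Set.mem_univ π
  obtain ⟨s, ⟨n, rfl⟩, hn⟩ := hπmem
  obtain ⟨x, hx, hne⟩ := hdiag n π hn
  exact hne rfl
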